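/- If L is regular and ℛ-trivial and F is a finite language, then L ↑_C F is ℛ-trivial, for any subalphabet C. -/

import Mathlib

open List

variable {A : Type*}

/-- Extract the subword of `x` at positions `K`. -/
def extractW (x : List A) (K : Finset (Fin x.length)) : List A :=
  ((List.finRange x.length).filter (fun i => i ∈ K)).map x.get

/-- `InterpW C u v x` : `x` is a shuffle of `u` and `v` with possible sharing of letters in `C`. -/
def InterpW (C : Set A) (u v x : List A) : Prop :=
  ∃ K K' : Finset (Fin x.length), K ∪ K' = Finset.univ ∧
    extractW x K = u ∧ extractW x K' = v ∧ ∀ a ∈ extractW x (K ∩ K'), a ∈ C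

/-- Interpolation product of languages. -/
def interpL (C : Set A) (L L' : Set (List A)) : Set (List A) :=
  {x | ∃ u ∈ L, ∃ v ∈ L', InterpW C u v x}

/-- Shuffle product of languages. -/
def shuffleL (L L' : Set (List A)) : Set (List A) := interpL ∅ L L'

/-- Simon's congruence: same scattered subwords of length at most `k`. -/
def SimK (k : ℕ) (u v : List A) : Prop :=
  ∀ w : List A, w.length ≤ k → (w.Sublist u ↔ w.Sublist v)

/-- Piecewise-testability: union of `∼ₖ`-classes for some `k`. -/
def PT (L : Set (List A)) : Prop :=
  ∃ k, ∀ u v : List A, SimK k u v → (u ∈ L ↔ v ∈ L)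

/-- A DFA is acyclic when every cycle is a self-loop. -/
def DFA.Acyclic {σ : Type*} (M : DFA A σ) : Prop :=
  ∀ p q (u v : List A), M.evalFrom p u = q → M.evalFrom q v = p → p = q

/-- A language is ℛ-trivial iff it is recognized by a finite acyclic DFA. -/
def RTrivial (L : Set (List A)) : Prop :=
  ∃ (σ : Type) (_ : Fintype σ) (M : DFA A σ), M.Acyclic ∧ ∀ x, x ∈ M.accepts ↔ x ∈ L

def subSucc {n : ℕ} (K : Finset (Fin (n+1))) : Finset (Fin n) :=
  Finset.univ.filter (fun i => i.succ ∈ K)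

@[simp] lemma mem_subSucc {n : ℕ} (K : Finset (Fin (n+1))) (i : Fin n) :
    i ∈ subSucc K ↔ i.succ ∈ K := by simp [subSucc]

lemma extractW_nil (K : Finset (Fin ([] : List A).length)) : extractW [] K = [] := by
  simp [extractW]

lemma extractW_cons (a : A) (x : List A) (K : Finset (Fin (x.length + 1))) :
    extractW (a :: x) K
      = (if (0 : Fin (x.length+1)) ∈ K then [a] else []) ++ extractW x (subSucc K) := by
  show ((List.finRange (x.length+1)).filter (fun i => i ∈ K)).map (fun i => (a::x).get i) = _
  rw [List.finRange_succ, List.filter_cons, List.filter_map]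
  have h3 : List.filter ((fun (i : Fin (x.length+1)) => decide (i ∈ K)) ∘ Fin.succ) (finRange x.length)
      = List.filter (fun i => decide (i ∈ subSucc K)) (finRange x.length) :=
    List.filter_congr (by intro i _; simp)
  rw [h3]
  by_cases h0 : (0:Fin (x.length+1)) ∈ K <;>
    simp [h0, List.map_map, Function.comp_def, extractW]

def liftK {n : ℕ} (b : Bool) (K : Finset (Fin n)) : Finset (Fin (n+1)) :=
  (if b then {0} else ∅) ∪ K.image Fin.succ

@[simp] lemma mem0_liftK {n : ℕ} (b : Bool) (K : Finset (Fin n)) :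
    ((0 : Fin (n+1)) ∈ liftK b K) ↔ b = true := by
  cases b <;> simp [liftK, Fin.succ_ne_zero, eq_comm (a := (0 : Fin (n+1)))]

@[simp] lemma subSucc_liftK {n : ℕ} (b : Bool) (K : Finset (Fin n)) :
    subSucc (liftK b K) = K := by
  ext i
  cases b <;> simp [liftK, Fin.succ_ne_zero, Fin.succ_inj]

lemma subSucc_union {n : ℕ} (K K' : Finset (Fin (n+1))) :
    subSucc (K ∪ K') = subSucc K ∪ subSucc K' := by ext i; simp

lemma subSucc_inter {n : ℕ} (K K' : Finset (Fin (n+1))) :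
    subSucc (K ∩ K') = subSucc K ∩ subSucc K' := by ext i; simp

lemma liftK_union {n : ℕ} (b b' : Bool) (K K' : Finset (Fin n)) :
    liftK b K ∪ liftK b' K' = liftK (b || b') (K ∪ K') := by
  ext i
  cases b <;> cases b' <;>
    simp [liftK, Finset.image_union, Finset.union_comm, Finset.union_assoc, Finset.union_left_comm]

lemma liftK_inter {n : ℕ} (b b' : Bool) (K K' : Finset (Fin n)) :
    liftK b K ∩ liftK b' K' = liftK (b && b') (K ∩ K') := by
  ext i
  cases i using Fin.cases <;> cases b <;> cases b' <;>
    simp [liftK, Fin.succ_ne_zero, eq_comm (a := (0 : Fin (n+1))), Fin.succ_inj]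

lemma liftK_true_univ {n : ℕ} : liftK true (Finset.univ : Finset (Fin n)) = Finset.univ := by
  ext i
  cases i using Fin.cases <;> simp [liftK, eq_comm (a := (0 : Fin (n+1))), Fin.succ_inj]

lemma interpW_nil (C : Set A) (u v : List A) : InterpW C u v [] ↔ u = [] ∧ v = [] := by
  constructor
  · rintro ⟨K, K', -, hu, hv, -⟩
    rw [← hu, ← hv]
    exact ⟨extractW_nil _, extractW_nil _⟩
  · rintro ⟨rfl, rfl⟩
    exact ⟨Finset.univ, Finset.univ, by simp, extractW_nil _, extractW_nil _,
      by rw [extractW_nil]; simp⟩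

lemma interpW_cons (C : Set A) (u v x : List A) (a : A) :
    InterpW C u v (a :: x) ↔
      (∃ u', u = a :: u' ∧ InterpW C u' v x) ∨
      (∃ v', v = a :: v' ∧ InterpW C u v' x) ∨
      (a ∈ C ∧ ∃ u' v', u = a :: u' ∧ v = a :: v' ∧ InterpW C u' v' x) := by
  constructor
  · rintro ⟨K, K', hcov, hu, hv, hsh⟩
    rw [extractW_cons] at hu hv
    rw [show K ∩ K' = K ∩ K' from rfl, extractW_cons] at hsh
    rw [subSucc_inter] at hsh
    have hcov' : subSucc K ∪ subSucc K' = Finset.univ := by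
      rw [← subSucc_union, hcov]; ext i; simp
    by_cases h0 : (0 : Fin (x.length+1)) ∈ K <;> by_cases h0' : (0 : Fin (x.length+1)) ∈ K'
    · refine Or.inr (Or.inr ⟨?_, extractW x (subSucc K), extractW x (subSucc K'), ?_, ?_, ?_⟩)
      · exact hsh a (by simp [Finset.mem_inter.mpr ⟨h0, h0'⟩])
      · simp [h0] at hu; exact hu.symm
      · simp [h0'] at hv; exact hv.symm
      · exact ⟨subSucc K, subSucc K', hcov', rfl, rfl,
          fun b hb => hsh b (by simp only [Finset.mem_inter.mpr ⟨h0, h0'⟩, if_pos]; simp [hb])⟩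
    · refine Or.inl ⟨extractW x (subSucc K), ?_, ?_⟩
      · simp [h0] at hu; exact hu.symm
      · refine ⟨subSucc K, subSucc K', hcov', rfl, ?_, ?_⟩
        · simp [h0'] at hv; exact hv
        · intro b hb
          refine hsh b ?_
          have : (0 : Fin (x.length+1)) ∉ K ∩ K' := by simp [h0']
          simp [this, hb]
    · refine Or.inr (Or.inl ⟨extractW x (subSucc K'), ?_, ?_⟩)
      · simp [h0'] at hv; exact hv.symm
      · refine ⟨subSucc K, subSucc K', hcov', ?_, rfl, ?_⟩
        · simp [h0] at hu; exact hu
        · intro b hb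
          refine hsh b ?_
          have : (0 : Fin (x.length+1)) ∉ K ∩ K' := by simp [h0]
          simp [this, hb]
    · exfalso
      have := Finset.ext_iff.mp hcov (0 : Fin (x.length+1))
      simp [h0, h0'] at this
  · rintro (⟨u', rfl, Kt, Kt', hc, hu, hv, hsh⟩ | ⟨v', rfl, Kt, Kt', hc, hu, hv, hsh⟩ |
      ⟨hC, u', v', rfl, rfl, Kt, Kt', hc, hu, hv, hsh⟩)
    · refine ⟨liftK true Kt, liftK false Kt', by rw [liftK_union, hc]; simpa using liftK_true_univ,
        ?_, ?_, ?_⟩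
      · rw [extractW_cons]; simp [hu]
      · rw [extractW_cons]; simp [hv]
      · rw [liftK_inter, extractW_cons]; simpa using hsh
    · refine ⟨liftK false Kt, liftK true Kt', by rw [liftK_union, hc]; simpa using liftK_true_univ,
        ?_, ?_, ?_⟩
      · rw [extractW_cons]; simp [hu]
      · rw [extractW_cons]; simp [hv]
      · rw [liftK_inter, extractW_cons]; simpa using hsh
    · refine ⟨liftK true Kt, liftK true Kt', by rw [liftK_union, hc]; simpa using liftK_true_univ,
        ?_, ?_, ?_⟩
      · rw [extractW_cons]; simp [hu]
      · rw [extractW_cons]; simp [hv]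
      · rw [liftK_inter, extractW_cons]
        simp only [mem0_liftK]
        intro b hb
        rcases (by simpa using hb : b = a ∨ b ∈ extractW x (Kt ∩ Kt')) with rfl | hb'
        · exact hC
        · exact hsh b hb'

inductive IW (C : Set A) : List A → List A → List A → Prop
  | nil : IW C [] [] []
  | left (a : A) {u v x : List A} : IW C u v x → IW C (a :: u) v (a :: x)
  | right (a : A) {u v x : List A} : IW C u v x → IW C u (a :: v) (a :: x)
  | both {a : A} (hC : a ∈ C) {u v x : List A} : IW C u v x → IW C (a :: u) (a :: v) (a :: x)

lemma IW_nil_iff {C : Set A} {u v : List A} : IW C u v [] ↔ u = [] ∧ v = [] := by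
  constructor
  · intro h; cases h; exact ⟨rfl, rfl⟩
  · rintro ⟨rfl, rfl⟩; exact IW.nil

lemma interpW_iff_IW {C : Set A} {u v x : List A} : InterpW C u v x ↔ IW C u v x := by
  induction x generalizing u v with
  | nil =>
    rw [interpW_nil, IW_nil_iff]
  | cons a x ih =>
    rw [interpW_cons]
    constructor
    · rintro (⟨u', rfl, h⟩ | ⟨v', rfl, h⟩ | ⟨hC, u', v', rfl, rfl, h⟩)
      · exact IW.left a (ih.mp h)
      · exact IW.right a (ih.mp h)
      · exact IW.both hC (ih.mp h)
    · intro h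
      cases h with
      | left a h => exact Or.inl ⟨_, rfl, ih.mpr h⟩
      | right a h => exact Or.inr (Or.inl ⟨_, rfl, ih.mpr h⟩)
      | both hC h => exact Or.inr (Or.inr ⟨hC, _, _, rfl, rfl, ih.mpr h⟩)

lemma IW_snoc {C : Set A} {u v x : List A} {a : A} :
    IW C u v (x ++ [a]) ↔
      (∃ u', u = u' ++ [a] ∧ IW C u' v x) ∨
      (∃ v', v = v' ++ [a] ∧ IW C u v' x) ∨
      (a ∈ C ∧ ∃ u' v', u = u' ++ [a] ∧ v = v' ++ [a] ∧ IW C u' v' x) := by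
  induction x generalizing u v with
  | nil =>
    simp only [List.nil_append]
    constructor
    · intro h
      cases h with
      | left b h => rcases IW_nil_iff.mp h with ⟨rfl, rfl⟩; exact Or.inl ⟨[], rfl, IW.nil⟩
      | right b h => rcases IW_nil_iff.mp h with ⟨rfl, rfl⟩; exact Or.inr (Or.inl ⟨[], rfl, IW.nil⟩)
      | both hC h => rcases IW_nil_iff.mp h with ⟨rfl, rfl⟩;
                     exact Or.inr (Or.inr ⟨hC, [], [], rfl, rfl, IW.nil⟩)
    · rintro (⟨u', rfl, h⟩ | ⟨v', rfl, h⟩ | ⟨hC, u', v', rfl, rfl, h⟩) <;>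
        rcases IW_nil_iff.mp h with ⟨rfl, rfl⟩
      · exact IW.left a IW.nil
      · exact IW.right a IW.nil
      · exact IW.both hC IW.nil
  | cons b x ih =>
    constructor
    · intro h
      cases h with
      | left _h_ h =>
        rcases ih.mp h with ⟨u', rfl, h'⟩ | ⟨v', rfl, h'⟩ | ⟨hC, u', v', rfl, rfl, h'⟩
        · exact Or.inl ⟨b :: u', rfl, IW.left b h'⟩
        · exact Or.inr (Or.inl ⟨v', rfl, IW.left b h'⟩)
        · exact Or.inr (Or.inr ⟨hC, b :: u', v', rfl, rfl, IW.left b h'⟩)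
      | right _h_ h =>
        rcases ih.mp h with ⟨u', rfl, h'⟩ | ⟨v', rfl, h'⟩ | ⟨hC, u', v', rfl, rfl, h'⟩
        · exact Or.inl ⟨u', rfl, IW.right b h'⟩
        · exact Or.inr (Or.inl ⟨b :: v', rfl, IW.right b h'⟩)
        · exact Or.inr (Or.inr ⟨hC, u', b :: v', rfl, rfl, IW.right b h'⟩)
      | both hc h =>
        rcases ih.mp h with ⟨u', rfl, h'⟩ | ⟨v', rfl, h'⟩ | ⟨hC, u', v', rfl, rfl, h'⟩
        · exact Or.inl ⟨_ :: u', rfl, IW.both hc h'⟩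
        · exact Or.inr (Or.inl ⟨_ :: v', rfl, IW.both hc h'⟩)
        · exact Or.inr (Or.inr ⟨hC, _ :: u', _ :: v', rfl, rfl, IW.both hc h'⟩)
    · rintro (⟨u', rfl, h⟩ | ⟨v', rfl, h⟩ | ⟨hC, u', v', rfl, rfl, h⟩)
      · cases h with
        | left _h_ h' => exact IW.left b (ih.mpr (Or.inl ⟨_, rfl, h'⟩))
        | right _h_ h' => exact IW.right b (ih.mpr (Or.inl ⟨_, rfl, h'⟩))
        | both hc h' => exact IW.both hc (ih.mpr (Or.inl ⟨_, rfl, h'⟩))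
      · cases h with
        | left _h_ h' => exact IW.left b (ih.mpr (Or.inr (Or.inl ⟨_, rfl, h'⟩)))
        | right _h_ h' => exact IW.right b (ih.mpr (Or.inr (Or.inl ⟨_, rfl, h'⟩)))
        | both hc h' => exact IW.both hc (ih.mpr (Or.inr (Or.inl ⟨_, rfl, h'⟩)))
      · cases h with
        | left _h_ h' => exact IW.left b (ih.mpr (Or.inr (Or.inr ⟨hC, _, _, rfl, rfl, h'⟩)))
        | right _h_ h' => exact IW.right b (ih.mpr (Or.inr (Or.inr ⟨hC, _, _, rfl, rfl, h'⟩)))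
        | both hc h' => exact IW.both hc (ih.mpr (Or.inr (Or.inr ⟨hC, _, _, rfl, rfl, h'⟩)))

lemma rtrivial_empty : RTrivial (∅ : Set (List A)) := by
  refine ⟨Unit, inferInstance, ⟨fun _ _ => (), (), ∅⟩, ?_, ?_⟩
  · intro p q u w _ _; exact Subsingleton.elim p q
  · intro x; simp [DFA.mem_accepts]

lemma prod_evalFrom {σ₁ σ₂ : Type} (M₁ : DFA A σ₁) (M₂ : DFA A σ₂)
    (p : σ₁ × σ₂) (w : List A) :
    (DFA.mk (fun s a => (M₁.step s.1 a, M₂.step s.2 a)) (M₁.start, M₂.start)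
      {s | s.1 ∈ M₁.accept ∨ s.2 ∈ M₂.accept} : DFA A (σ₁ × σ₂)).evalFrom p w
      = (M₁.evalFrom p.1 w, M₂.evalFrom p.2 w) := by
  induction w generalizing p with
  | nil => rfl
  | cons a w ih => exact ih (M₁.step p.1 a, M₂.step p.2 a)

lemma rtrivial_union {L₁ L₂ : Set (List A)} (h₁ : RTrivial L₁) (h₂ : RTrivial L₂) :
    RTrivial (L₁ ∪ L₂) := by
  obtain ⟨σ₁, i₁, M₁, hA₁, hacc₁⟩ := h₁
  obtain ⟨σ₂, i₂, M₂, hA₂, hacc₂⟩ := h₂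
  refine ⟨σ₁ × σ₂, @instFintypeProd _ _ i₁ i₂,
    DFA.mk (fun s a => (M₁.step s.1 a, M₂.step s.2 a)) (M₁.start, M₂.start)
      {s | s.1 ∈ M₁.accept ∨ s.2 ∈ M₂.accept}, ?_, ?_⟩
  · intro p q u w hu hw
    rw [prod_evalFrom] at hu hw
    have e1 : M₁.evalFrom p.1 u = q.1 := congrArg Prod.fst hu
    have e2 : M₁.evalFrom q.1 w = p.1 := congrArg Prod.fst hw
    have e3 : M₂.evalFrom p.2 u = q.2 := congrArg Prod.snd hu
    have e4 : M₂.evalFrom q.2 w = p.2 := congrArg Prod.snd hw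
    exact Prod.ext (hA₁ _ _ _ _ e1 e2) (hA₂ _ _ _ _ e3 e4)
  · intro x
    rw [DFA.mem_accepts]
    show (_ : σ₁ × σ₂).1 ∈ M₁.accept ∨ _ ∈ M₂.accept ↔ _
    rw [show (DFA.mk (fun s a => (M₁.step s.1 a, M₂.step s.2 a)) (M₁.start, M₂.start)
      {s | s.1 ∈ M₁.accept ∨ s.2 ∈ M₂.accept} : DFA A (σ₁ × σ₂)).eval x
        = (M₁.evalFrom M₁.start x, M₂.evalFrom M₂.start x) from prod_evalFrom M₁ M₂ _ x]
    constructor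
    · rintro (h | h)
      · exact Or.inl ((hacc₁ x).mp ((DFA.mem_accepts M₁).mpr h))
      · exact Or.inr ((hacc₂ x).mp ((DFA.mem_accepts M₂).mpr h))
    · rintro (h | h)
      · exact Or.inl ((DFA.mem_accepts M₁).mp ((hacc₁ x).mpr h))
      · exact Or.inr ((DFA.mem_accepts M₂).mp ((hacc₂ x).mpr h))

lemma interpL_empty (C : Set A) (L : Set (List A)) : interpL C L ∅ = ∅ := by
  ext x; simp [interpL]

lemma interpL_insert (C : Set A) (L F : Set (List A)) (v : List A) :
    interpL C L (insert v F) = interpL C L {v} ∪ interpL C L F := by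
  ext x
  simp only [interpL, Set.mem_setOf_eq, Set.mem_union, Set.mem_insert_iff, Set.mem_singleton_iff]
  constructor
  · rintro ⟨u, hu, w, (rfl | hw), h⟩
    · exact Or.inl ⟨u, hu, w, rfl, h⟩
    · exact Or.inr ⟨u, hu, w, hw, h⟩
  · rintro (⟨u, hu, w, rfl, h⟩ | ⟨u, hu, w, hw, h⟩)
    · exact ⟨u, hu, w, Or.inl rfl, h⟩
    · exact ⟨u, hu, w, Or.inr hw, h⟩

section Construction

open Classical

variable {σ : Type} (M : DFA A σ) (v : List A) (C : Set A)

noncomputable def transP (a : A) (s : σ × Fin (v.length+1)) : Finset (σ × Fin (v.length+1)) :=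
  {(M.step s.1 a, s.2)} ∪
    (if h : v[(s.2 : ℕ)]? = some a then
      have hlt : (s.2 : ℕ) + 1 < v.length + 1 :=
        Nat.succ_lt_succ (List.getElem?_eq_some_iff.mp h).1
      {(s.1, (⟨(s.2:ℕ)+1, hlt⟩ : Fin (v.length+1)))} ∪
        (if a ∈ C then {(M.step s.1 a, (⟨(s.2:ℕ)+1, hlt⟩ : Fin (v.length+1)))} else ∅)
    else ∅)

lemma mem_transP {a : A} {q p : σ} {j i : Fin (v.length+1)} :
    (q, j) ∈ transP M v C a (p, i) ↔
      (q = M.step p a ∧ j = i) ∨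
      ((j : ℕ) = (i : ℕ) + 1 ∧ v[(i:ℕ)]? = some a ∧ (q = p ∨ (a ∈ C ∧ q = M.step p a))) := by
  unfold transP
  split_ifs with h1 h2 <;> simp_all [Prod.ext_iff, Fin.ext_iff] <;> tauto

noncomputable def NDFA : DFA A (Finset (σ × Fin (v.length+1))) where
  step S a := S.biUnion (transP M v C a)
  start := {(M.start, (0 : Fin (v.length+1)))}
  accept := {S | ∃ q, (q, Fin.last v.length) ∈ S ∧ q ∈ M.accept}

lemma mem_NDFA_step {S : Finset (σ × Fin (v.length+1))} {a : A} {t} :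
    t ∈ (NDFA M v C).step S a ↔ ∃ s ∈ S, t ∈ transP M v C a s :=
  Finset.mem_biUnion

lemma NDFA_eval (x : List A) (q : σ) (j : Fin (v.length+1)) :
    (q, j) ∈ (NDFA M v C).eval x ↔
      ∃ u, M.evalFrom M.start u = q ∧ IW C u (v.take (j:ℕ)) x := by
  induction x using List.reverseRecOn generalizing q j with
  | nil =>
    show (q, j) ∈ ({(M.start, (0 : Fin (v.length+1)))} : Finset _) ↔ _
    rw [Finset.mem_singleton, Prod.ext_iff]
    constructor
    · rintro ⟨rfl, rfl⟩
      exact ⟨[], rfl, by simpa using IW.nil⟩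
    · rintro ⟨u, hu, hiw⟩
      rcases IW_nil_iff.mp hiw with ⟨rfl, htake⟩
      have hj0 : (j:ℕ) = 0 := by
        rcases List.take_eq_nil_iff.mp htake with h | h
        · exact h
        · have h1 := j.isLt
          have h2 : v.length = 0 := by rw [h]; rfl
          omega
      exact ⟨hu.symm, Fin.ext hj0⟩
  | append_singleton x a ih =>
    rw [DFA.eval_append_singleton]
    constructor
    · intro h
      rcases (mem_NDFA_step M v C).mp h with ⟨⟨p, i⟩, hpS, htr⟩
      rcases (mem_transP M v C).mp htr with ⟨rfl, rfl⟩ | ⟨hji, hvi, hq⟩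
      · obtain ⟨u, hu, hiw⟩ := (ih p j).mp hpS
        exact ⟨u ++ [a], by simp [hu], IW_snoc.mpr (Or.inl ⟨u, rfl, hiw⟩)⟩
      · obtain ⟨u, hu, hiw⟩ := (ih p i).mp hpS
        have htake : v.take (j:ℕ) = v.take (i:ℕ) ++ [a] := by
          rw [hji, List.take_succ, hvi]; rfl
        rcases hq with rfl | ⟨hC, rfl⟩
        · exact ⟨u, hu, by rw [htake]; exact IW_snoc.mpr (Or.inr (Or.inl ⟨_, rfl, hiw⟩))⟩
        · exact ⟨u ++ [a], by simp [hu],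
            by rw [htake]; exact IW_snoc.mpr (Or.inr (Or.inr ⟨hC, u, _, rfl, rfl, hiw⟩))⟩
    · rintro ⟨u, hu, hiw⟩
      rcases IW_snoc.mp hiw with ⟨u', rfl, h'⟩ | ⟨v', hv', h'⟩ | ⟨hC, u', v', rfl, hv', h'⟩
      · refine (mem_NDFA_step M v C).mpr
          ⟨(M.evalFrom M.start u', j), (ih _ j).mpr ⟨u', rfl, h'⟩, ?_⟩
        refine (mem_transP M v C).mpr (Or.inl ⟨?_, rfl⟩)
        rw [← hu, DFA.evalFrom_append_singleton]
      · have hk0 : (j:ℕ) ≠ 0 := by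
          intro h0; rw [h0] at hv'; simp at hv'
        have hkn : (j:ℕ) ≤ v.length := Nat.lt_succ_iff.mp j.isLt
        have hlenv' : v'.length = (j:ℕ) - 1 := by
          have := congrArg List.length hv'
          simp [List.length_take] at this
          omega
        have hv'' : v' = v.take ((j:ℕ) - 1) := by
          have h2 : v' = (v' ++ [a]).take v'.length := (List.take_left (l₁ := v') (l₂ := [a])).symm
          rw [← hv', List.take_take, hlenv', min_eq_left (by omega)] at h2
          exact h2
        have ha : v[(j:ℕ)-1]? = some a := by
          have h2 : (v.take (j:ℕ))[(j:ℕ)-1]? = (v' ++ [a])[(j:ℕ)-1]? := by rw [hv']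
          rw [List.getElem?_take, if_pos (by omega : (j:ℕ)-1 < (j:ℕ))] at h2
          rw [h2, ← hlenv', List.getElem?_append_right (le_refl _)]
          simp
        refine (mem_NDFA_step M v C).mpr
          ⟨(q, ⟨(j:ℕ)-1, by omega⟩), (ih q ⟨(j:ℕ)-1, by omega⟩).mpr ⟨u, hu, ?_⟩, ?_⟩
        · show IW C u (v.take ((j:ℕ)-1)) x
          rwa [← hv'']
        · refine (mem_transP M v C).mpr (Or.inr ⟨?_, ?_, Or.inl rfl⟩)
          · show (j:ℕ) = (j:ℕ) - 1 + 1; omega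
          · exact ha
      · have hk0 : (j:ℕ) ≠ 0 := by
          intro h0; rw [h0] at hv'; simp at hv'
        have hkn : (j:ℕ) ≤ v.length := Nat.lt_succ_iff.mp j.isLt
        have hlenv' : v'.length = (j:ℕ) - 1 := by
          have := congrArg List.length hv'
          simp [List.length_take] at this
          omega
        have hv'' : v' = v.take ((j:ℕ) - 1) := by
          have h2 : v' = (v' ++ [a]).take v'.length := (List.take_left (l₁ := v') (l₂ := [a])).symm
          rw [← hv', List.take_take, hlenv', min_eq_left (by omega)] at h2
          exact h2
        have ha : v[(j:ℕ)-1]? = some a := by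
          have h2 : (v.take (j:ℕ))[(j:ℕ)-1]? = (v' ++ [a])[(j:ℕ)-1]? := by rw [hv']
          rw [List.getElem?_take, if_pos (by omega : (j:ℕ)-1 < (j:ℕ))] at h2
          rw [h2, ← hlenv', List.getElem?_append_right (le_refl _)]
          simp
        refine (mem_NDFA_step M v C).mpr
          ⟨(M.evalFrom M.start u', ⟨(j:ℕ)-1, by omega⟩),
            (ih _ ⟨(j:ℕ)-1, by omega⟩).mpr ⟨u', rfl, ?_⟩, ?_⟩
        · show IW C u' (v.take ((j:ℕ)-1)) x
          rwa [← hv'']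
        · refine (mem_transP M v C).mpr (Or.inr ⟨?_, ?_, Or.inr ⟨hC, ?_⟩⟩)
          · show (j:ℕ) = (j:ℕ) - 1 + 1; omega
          · exact ha
          · rw [← hu, DFA.evalFrom_append_singleton]

lemma NDFA_accepts (x : List A) :
    x ∈ (NDFA M v C).accepts ↔ ∃ u, u ∈ M.accepts ∧ IW C u v x := by
  rw [DFA.mem_accepts]
  show (∃ q, (q, Fin.last v.length) ∈ (NDFA M v C).eval x ∧ q ∈ M.accept) ↔ _
  constructor
  · rintro ⟨q, hmem, hacc⟩
    obtain ⟨u, hu, hiw⟩ := (NDFA_eval M v C x q (Fin.last _)).mp hmem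
    refine ⟨u, (DFA.mem_accepts M).mpr ?_, ?_⟩
    · show M.evalFrom M.start u ∈ M.accept; rw [hu]; exact hacc
    · simpa [Fin.val_last, List.take_length] using hiw
  · rintro ⟨u, hu, hiw⟩
    exact ⟨M.eval u,
      (NDFA_eval M v C x _ (Fin.last _)).mpr ⟨u, rfl, by simpa [Fin.val_last, List.take_length]⟩,
      (DFA.mem_accepts M).mp hu⟩

end Construction

section Acyclic

open Classical

variable {σ : Type} (M : DFA A σ) (v : List A) (C : Set A)

def Reach (p q : σ) : Prop := ∃ w : List A, M.evalFrom p w = q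

lemma reach_refl (p : σ) : Reach M p p := ⟨[], rfl⟩

lemma reach_trans {p q r : σ} (h1 : Reach M p q) (h2 : Reach M q r) : Reach M p r := by
  obtain ⟨w1, rfl⟩ := h1
  obtain ⟨w2, rfl⟩ := h2
  exact ⟨w1 ++ w2, M.evalFrom_of_append _ _ _⟩

lemma reach_antisymm (hAc : M.Acyclic) {p q : σ} (h1 : Reach M p q) (h2 : Reach M q p) :
    p = q := by
  obtain ⟨w1, e1⟩ := h1
  obtain ⟨w2, e2⟩ := h2
  exact hAc p q w1 w2 e1 e2

lemma cycle_fix [Fintype σ] (hAc : M.Acyclic) (z : List A) (X : Finset σ)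
    (hX : X.image (fun p => M.evalFrom p z) = X) :
    ∀ p ∈ X, ∀ t, M.evalFrom p (z.take t) = p := by
  classical
  set g : σ → σ := fun p => M.evalFrom p z with hg
  have hmaps : ∀ p ∈ X, g p ∈ X := fun p hp => hX ▸ Finset.mem_image_of_mem g hp
  have hinj : Set.InjOn g X := Finset.injOn_of_card_image_eq (by rw [hX])
  have hiter : ∀ p ∈ X, ∀ k, g^[k] p ∈ X := by
    intro p hp k
    induction k with
    | zero => exact hp
    | succ k ihk => rw [Function.iterate_succ_apply']; exact hmaps _ ihk
  have hfix : ∀ p ∈ X, g p = p := by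
    intro p hp
    obtain ⟨k, l, hkl, hkeq⟩ : ∃ k l : ℕ, k < l ∧ g^[k] p = g^[l] p := by
      obtain ⟨k, l, hne, heq⟩ := Finite.exists_ne_map_eq_of_infinite (fun k : ℕ => g^[k] p)
      rcases Nat.lt_or_ge k l with h | h
      · exact ⟨k, l, h, heq⟩
      · exact ⟨l, k, lt_of_le_of_ne h (Ne.symm hne), heq.symm⟩
    have hreach : ∀ i j : ℕ, i ≤ j → Reach M (g^[i] p) (g^[j] p) := by
      intro i j hij
      induction j, hij using Nat.le_induction with
      | base => exact reach_refl M _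
      | succ j hij ihj =>
        refine reach_trans M ihj ?_
        rw [Function.iterate_succ_apply']
        exact ⟨z, rfl⟩
    have heq1 : g^[k] p = g^[k+1] p := by
      refine reach_antisymm M hAc (by rw [Function.iterate_succ_apply']; exact ⟨z, rfl⟩) ?_
      exact hkeq ▸ hreach (k+1) l hkl
    have hdescend : ∀ m : ℕ, g^[m] p = g^[m+1] p → g p = p := by
      intro m
      induction m with
      | zero => intro h; simpa using h.symm
      | succ m ihm =>
        intro h
        apply ihm
        apply hinj (hiter p hp m) (hiter p hp (m+1))
        rw [← Function.iterate_succ_apply' g m p, ← Function.iterate_succ_apply' g (m+1) p]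
        exact h
    exact hdescend k heq1
  intro p hp t
  have h1 : Reach M p (M.evalFrom p (z.take t)) := ⟨_, rfl⟩
  have h2 : Reach M (M.evalFrom p (z.take t)) p :=
    ⟨z.drop t, by rw [← M.evalFrom_of_append, List.take_append_drop]; exact hfix p hp⟩
  exact (reach_antisymm M hAc h1 h2).symm

variable [Fintype σ]

lemma layers_core (hAc : M.Acyclic) (z : List A) (S0 : Finset (σ × Fin (v.length+1)))
    (hcyc : (NDFA M v C).evalFrom S0 z = S0) (j : ℕ)
    (hbstab : ∀ t ≤ z.length, ∀ (p : σ) (i : Fin (v.length+1)), (i:ℕ) < j →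
        ((p,i) ∈ (NDFA M v C).evalFrom S0 (z.take t) ↔ (p,i) ∈ S0))
    (hbfix : ∀ t, ∀ (ht : t < z.length), ∀ (p : σ) (i : Fin (v.length+1)), (i:ℕ) < j →
        (p,i) ∈ (NDFA M v C).evalFrom S0 (z.take t) → M.step p (z.get ⟨t, ht⟩) = p) :
    (∀ t ≤ z.length, ∀ (p : σ) (i : Fin (v.length+1)), (i:ℕ) = j →
        ((p,i) ∈ (NDFA M v C).evalFrom S0 (z.take t) ↔ (p,i) ∈ S0)) ∧
      (∀ t, ∀ (ht : t < z.length), ∀ (p : σ) (i : Fin (v.length+1)), (i:ℕ) = j →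
        (p,i) ∈ (NDFA M v C).evalFrom S0 (z.take t) → M.step p (z.get ⟨t, ht⟩) = p) := by
  classical
  by_cases hjn : j ≤ v.length
  swap
  · constructor
    · intro t ht p i hij; exact absurd (hij ▸ i.isLt) (by omega)
    · intro t ht p i hij; exact absurd (hij ▸ i.isLt) (by omega)
  set m := z.length with hm
  set N := NDFA M v C with hN
  set S : ℕ → Finset (σ × Fin (v.length+1)) := fun t => N.evalFrom S0 (z.take t) with hS
  have hS0 : S 0 = S0 := by simp [hS]
  have hSm : S m = S0 := by rw [hS]; simp only [hm, List.take_length]; exact hcyc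
  have hstep : ∀ t, ∀ (ht : t < m), S (t+1) = N.step (S t) (z.get ⟨t, ht⟩) := by
    intro t ht
    simp only [hS]
    have : z.take (t+1) = z.take t ++ [z.get ⟨t, ht⟩] := by
      rw [List.take_succ, List.getElem?_eq_getElem ht]; rfl
    rw [this, DFA.evalFrom_append_singleton]
  set jF : Fin (v.length+1) := ⟨j, by omega⟩ with hjF
  set X : ℕ → Finset σ := fun t => Finset.univ.filter (fun p => (p, jF) ∈ S t) with hX
  have hmemX : ∀ t p, p ∈ X t ↔ (p, jF) ∈ S t := by
    intro t p; simp [hX]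
  -- below-layer elements are in every S t and fixed by every letter
  have hbelow : ∀ (p : σ) (i : Fin (v.length+1)), (i:ℕ) < j →
      (∃ t ≤ m, (p,i) ∈ S t) → (∀ t ≤ m, (p,i) ∈ S t) ∧
        ∀ t', ∀ (ht' : t' < m), M.step p (z.get ⟨t', ht'⟩) = p := by
    intro p i hij ⟨t0, ht0, hmem⟩
    have h0 : (p,i) ∈ S0 := (hbstab t0 ht0 p i hij).mp hmem
    refine ⟨fun t ht => (hbstab t ht p i hij).mpr h0, fun t' ht' => ?_⟩
    exact hbfix t' ht' p i hij ((hbstab t' (le_of_lt ht') p i hij).mpr h0)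
  -- image inclusion
  have himg : ∀ t, ∀ (ht : t < m), ∀ p ∈ X t, M.step p (z.get ⟨t, ht⟩) ∈ X (t+1) := by
    intro t ht p hp
    rw [hmemX] at hp ⊢
    rw [hstep t ht]
    exact (mem_NDFA_step M v C).mpr ⟨(p, jF), hp, (mem_transP M v C).mpr (Or.inl ⟨rfl, rfl⟩)⟩
  -- decomposition of X (t+1)
  have hdec : ∀ t, ∀ (ht : t < m), ∀ q ∈ X (t+1),
      (∃ p ∈ X t, q = M.step p (z.get ⟨t, ht⟩)) ∨
        (∀ t', ∀ (ht' : t' < m), M.step q (z.get ⟨t', ht'⟩) = q) := by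
    intro t ht q hq
    have hq' := (hmemX _ _).mp hq
    rw [hstep t ht] at hq'
    rcases (mem_NDFA_step M v C).mp hq' with ⟨⟨p, i⟩, hpS, htr⟩
    rcases (mem_transP M v C).mp htr with ⟨rfl, rfl⟩ | ⟨hji, hvi, hcase⟩
    · exact Or.inl ⟨p, (hmemX t p).mpr hpS, rfl⟩
    · -- i is one below layer j
      have hij : (i:ℕ) < j := by
        have : (jF:ℕ) = j := rfl
        omega
      have hfixp := (hbelow p i hij ⟨t, le_of_lt ht, hpS⟩).2
      have hqp : q = p := by
        rcases hcase with rfl | ⟨-, rfl⟩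
        · rfl
        · exact hfixp t ht
      subst hqp
      exact Or.inr hfixp
  -- persistence of globally fixed elements
  have hpersist : ∀ q, (∀ t', ∀ (ht' : t' < m), M.step q (z.get ⟨t', ht'⟩) = q) →
      ∀ t0 t1, t0 ≤ t1 → t1 ≤ m → q ∈ X t0 → q ∈ X t1 := by
    intro q hfix t0 t1 h01 h1m hq
    induction t1, h01 using Nat.le_induction with
    | base => exact hq
    | succ t1 h01 ih =>
      have ht1 : t1 < m := by omega
      have := himg t1 ht1 q (ih (by omega))
      rwa [hfix t1 ht1] at this
  -- X (t+1) is exactly the image of X t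
  have hXstep : ∀ t, ∀ (ht : t < m),
      X (t+1) = (X t).image (fun p => M.step p (z.get ⟨t, ht⟩)) := by
    intro t ht
    apply Finset.Subset.antisymm
    · intro q hq
      rcases hdec t ht q hq with ⟨p, hp, rfl⟩ | hfix
      · exact Finset.mem_image_of_mem _ hp
      · -- q is globally fixed and q ∈ X (t+1) : propagate to X m = X 0 then to X t
        have hq0 : q ∈ X 0 := by
          have : q ∈ X m := hpersist q hfix (t+1) m (by omega) (le_refl m) hq
          rwa [show X m = X 0 by rw [hX]; simp only; rw [hSm, hS0]] at this
        have hqt : q ∈ X t := hpersist q hfix 0 t (by omega) (by omega) hq0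
        have : q = M.step q (z.get ⟨t, ht⟩) := (hfix t ht).symm
        rw [this] at hq ⊢
        exact Finset.mem_image_of_mem _ hqt
    · intro q hq
      rcases Finset.mem_image.mp hq with ⟨p, hp, rfl⟩
      exact himg t ht p hp
  -- X t is the image of X 0 under evalFrom (z.take t)
  have hXeval : ∀ t ≤ m, X t = (X 0).image (fun p => M.evalFrom p (z.take t)) := by
    intro t ht
    induction t with
    | zero => simp [List.take_zero]
    | succ t iht =>
      have ht' : t < m := by omega
      rw [hXstep t ht', iht (by omega), Finset.image_image]
      apply Finset.image_congr
      intro p _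
      simp only [Function.comp_apply]
      have : z.take (t+1) = z.take t ++ [z.get ⟨t, ht'⟩] := by
        rw [List.take_succ, List.getElem?_eq_getElem ht']; rfl
      rw [this, DFA.evalFrom_append_singleton]
  have hXcycle : (X 0).image (fun p => M.evalFrom p z) = X 0 := by
    have := hXeval m (le_refl m)
    rw [show X m = X 0 by rw [hX]; simp only; rw [hSm, hS0], hm, List.take_length] at this
    exact this.symm
  have hptfix := cycle_fix M hAc z (X 0) hXcycle
  -- X t = X 0
  have hXconst : ∀ t ≤ m, X t = X 0 := by
    intro t ht
    rw [hXeval t ht]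
    apply Finset.Subset.antisymm
    · intro q hq
      rcases Finset.mem_image.mp hq with ⟨p, hp, rfl⟩
      rwa [hptfix p hp t]
    · intro q hq
      refine Finset.mem_image.mpr ⟨q, hq, hptfix q hq t⟩
  constructor
  · intro t ht p i hij
    have hiF : i = jF := Fin.ext (by simp [hjF, hij])
    subst hiF
    rw [← hmemX, hXconst t ht, hmemX, hS0]
  · intro t ht p i hij hmem
    have hiF : i = jF := Fin.ext (by simp [hjF, hij])
    subst hiF
    have hp0 : p ∈ X 0 := by
      rw [← hXconst t (le_of_lt ht), hmemX]; exact hmem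
    have e1 := hptfix p hp0 t
    have e2 := hptfix p hp0 (t+1)
    have : z.take (t+1) = z.take t ++ [z.get ⟨t, ht⟩] := by
      rw [List.take_succ, List.getElem?_eq_getElem ht]; rfl
    rw [this, DFA.evalFrom_append_singleton, e1] at e2
    exact e2

lemma layers (hAc : M.Acyclic) (z : List A) (S0 : Finset (σ × Fin (v.length+1)))
    (hcyc : (NDFA M v C).evalFrom S0 z = S0) : ∀ j : ℕ,
    (∀ t ≤ z.length, ∀ (p : σ) (i : Fin (v.length+1)), (i:ℕ) ≤ j →
        ((p,i) ∈ (NDFA M v C).evalFrom S0 (z.take t) ↔ (p,i) ∈ S0)) ∧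
      (∀ t, ∀ (ht : t < z.length), ∀ (p : σ) (i : Fin (v.length+1)), (i:ℕ) ≤ j →
        (p,i) ∈ (NDFA M v C).evalFrom S0 (z.take t) → M.step p (z.get ⟨t, ht⟩) = p) := by
  intro j
  induction j with
  | zero =>
    have h := layers_core M v C hAc z S0 hcyc 0 (by omega) (by omega)
    exact ⟨fun t ht p i hij => h.1 t ht p i (by omega),
      fun t ht p i hij => h.2 t ht p i (by omega)⟩
  | succ j ihj =>
    have h := layers_core M v C hAc z S0 hcyc (j+1)
      (fun t ht p i hij => ihj.1 t ht p i (by omega))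
      (fun t ht p i hij => ihj.2 t ht p i (by omega))
    constructor
    · intro t ht p i hij
      rcases Nat.lt_or_ge (i:ℕ) (j+1) with hlt | hge
      · exact ihj.1 t ht p i (by omega)
      · exact h.1 t ht p i (by omega)
    · intro t ht p i hij
      rcases Nat.lt_or_ge (i:ℕ) (j+1) with hlt | hge
      · exact ihj.2 t ht p i (by omega)
      · exact h.2 t ht p i (by omega)

lemma NDFA_acyclic (hAc : M.Acyclic) : (NDFA M v C).Acyclic := by
  intro S T u w hu hw
  have hcyc : (NDFA M v C).evalFrom S (u ++ w) = S := by
    rw [DFA.evalFrom_of_append, hu, hw]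
  have hl := layers M v C hAc (u ++ w) S hcyc v.length
  have hT : T = (NDFA M v C).evalFrom S ((u ++ w).take u.length) := by
    rw [List.take_left]; exact hu.symm
  rw [hT]
  ext ⟨p, i⟩
  exact (hl.1 u.length (by simp) p i (Nat.lt_succ_iff.mp i.isLt)).symm
end Acyclic

lemma rtrivial_interp_single {L : Set (List A)} (hL : RTrivial L) (v : List A) (C : Set A) :
    RTrivial (interpL C L {v}) := by
  obtain ⟨σ, iσ, M, hAc, hacc⟩ := hL
  haveI := iσ
  refine ⟨Finset (σ × Fin (v.length+1)), inferInstance, NDFA M v C,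
    NDFA_acyclic M v C hAc, ?_⟩
  intro x
  rw [NDFA_accepts]
  simp only [interpL, Set.mem_setOf_eq, Set.mem_singleton_iff]
  constructor
  · rintro ⟨u, hu, hiw⟩
    exact ⟨u, (hacc u).mp hu, v, rfl, interpW_iff_IW.mpr hiw⟩
  · rintro ⟨u, hu, w, rfl, h⟩
    exact ⟨u, (hacc u).mpr hu, interpW_iff_IW.mp h⟩

theorem stmt13 {A : Type*} (L : Set (List A)) (hL : RTrivial L)
    (F : Set (List A)) (hF : F.Finite) (C : Set A) : RTrivial (interpL C L F) := by
  refine Set.Finite.induction_on (motive := fun s _ => RTrivial (interpL C L s)) F hF (by rw [interpL_empty]; exact rtrivial_empty) ?_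
  intro v F' _ _ ih
  rw [interpL_insert]
  exact rtrivial_union (rtrivial_interp_single hL v C) ih
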